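/- arXiv:1503.02551 — 2 statements merged into one kernel-verified Lean document; each statement's English description precedes it below -/
import Mathlib

section
/- Unbiasedness of random Fourier features: let P be a Borel probability measure on ℝ^d and let k : ℝ^d → ℝ satisfy k(δ) = E_{ω∼P}[cos(ωᵀδ)] for all δ ∈ ℝ^d. If ω ∼ P and b ∼ Uniform[0, 2π] are independent, then for all x, y ∈ ℝ^d, E_{ω,b}[ 2 cos(ωᵀx + b) · cos(ωᵀy + b) ] = k(x − y). -/
open MeasureTheory Matrix

/-- The uniform probability measure on the interval `[0, 2π] ⊆ ℝ`. -/
noncomputable def uniform02pi : Measure ℝ :=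
  (ENNReal.ofReal (2 * Real.pi))⁻¹ • volume.restrict (Set.Icc 0 (2 * Real.pi))

instance : IsProbabilityMeasure uniform02pi := by
  constructor
  rw [uniform02pi]
  simp [Real.volume_Icc]
  rw [ENNReal.inv_mul_cancel]
  · simp [Real.pi_pos.le]
    positivity
  · exact ENNReal.mul_ne_top (by norm_num) ENNReal.ofReal_ne_top

lemma cos_shift_int (θ : ℝ) : ∫ b, Real.cos (θ + 2 * b) ∂uniform02pi = 0 := by
  rw [uniform02pi, integral_smul_measure]
  have : ∫ b in Set.Icc 0 (2 * Real.pi), Real.cos (θ + 2 * b) = 0 := by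
    rw [MeasureTheory.integral_Icc_eq_integral_Ioc,
      ← intervalIntegral.integral_of_le (by positivity : (0:ℝ) ≤ 2 * Real.pi)]
    have : ∀ b : ℝ, Real.cos (θ + 2 * b) = Real.cos (2 * b + θ) := fun b => by
      ring_nf
    simp_rw [this]
    rw [intervalIntegral.integral_comp_mul_add Real.cos (by norm_num : (2:ℝ) ≠ 0) θ]
    simp [Real.sin_add, Real.cos_add]
    ring_nf
    have h1 : Real.sin (Real.pi * 4) = 0 := by
      rw [show Real.pi * 4 = (4:ℕ) * Real.pi by push_cast; ring]
      exact Real.sin_nat_mul_pi 4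
    have h2 : Real.cos (Real.pi * 4) = 1 := by
      rw [show Real.pi * 4 = (2:ℕ) * (2 * Real.pi) by push_cast; ring]
      exact Real.cos_nat_mul_two_pi 2
    rw [h1, h2]
    ring
  rw [this]
  simp

lemma cont_dot {d : ℕ} (c : Fin d → ℝ) : Continuous (fun ω : Fin d → ℝ => ω ⬝ᵥ c) := by
  unfold dotProduct
  exact continuous_finset_sum _ fun i _ => (continuous_apply i).mul continuous_const

/-- Unbiasedness of random Fourier features: if `P` is a Borel probability measure on `ℝ^d`
and `k δ = E_{ω∼P}[cos (ωᵀδ)]` for all `δ`, then for independent `ω ∼ P`,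
`b ∼ Uniform[0, 2π]` and all `x, y ∈ ℝ^d`,
`E[2 cos(ωᵀx + b) cos(ωᵀy + b)] = k (x - y)`. -/
theorem random_fourier_features_unbiased {d : ℕ} (P : Measure (Fin d → ℝ))
    [IsProbabilityMeasure P] (k : (Fin d → ℝ) → ℝ)
    (hk : ∀ δ, k δ = ∫ ω, Real.cos (ω ⬝ᵥ δ) ∂P) (x y : Fin d → ℝ) :
    ∫ p : (Fin d → ℝ) × ℝ,
        2 * Real.cos (p.1 ⬝ᵥ x + p.2) * Real.cos (p.1 ⬝ᵥ y + p.2)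
      ∂(P.prod uniform02pi) = k (x - y) := by
  have hrw : ∀ p : (Fin d → ℝ) × ℝ,
      2 * Real.cos (p.1 ⬝ᵥ x + p.2) * Real.cos (p.1 ⬝ᵥ y + p.2)
        = Real.cos (p.1 ⬝ᵥ (x - y)) + Real.cos (p.1 ⬝ᵥ (x + y) + 2 * p.2) := by
    intro p
    have h1 : p.1 ⬝ᵥ (x - y) = (p.1 ⬝ᵥ x + p.2) - (p.1 ⬝ᵥ y + p.2) := by
      rw [dotProduct_sub]; ring
    have h2 : p.1 ⬝ᵥ (x + y) + 2 * p.2 = (p.1 ⬝ᵥ x + p.2) + (p.1 ⬝ᵥ y + p.2) := by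
      rw [dotProduct_add]; ring
    have key : ∀ A B : ℝ, 2 * Real.cos A * Real.cos B
        = Real.cos (A - B) + Real.cos (A + B) := fun A B => by
      rw [Real.cos_sub, Real.cos_add]; ring
    rw [h1, h2]; exact key _ _
  simp_rw [hrw]
  have hc1 : Continuous (fun p : (Fin d → ℝ) × ℝ => Real.cos (p.1 ⬝ᵥ (x - y))) :=
    (Real.continuous_cos.comp (cont_dot (x - y))).comp continuous_fst
  have hc2 : Continuous (fun p : (Fin d → ℝ) × ℝ =>
      Real.cos (p.1 ⬝ᵥ (x + y) + 2 * p.2)) :=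
    Real.continuous_cos.comp (((cont_dot (x + y)).comp continuous_fst).add
      (continuous_const.mul continuous_snd))
  have hbound : ∀ (f : (Fin d → ℝ) × ℝ → ℝ), Continuous f → (∀ p, |f p| ≤ 1) →
      Integrable f (P.prod uniform02pi) := fun f hf hb =>
    (integrable_const 1).mono' hf.aestronglyMeasurable
      (ae_of_all _ fun p => by rw [Real.norm_eq_abs]; exact hb p)
  have hi1 := hbound _ hc1 fun p => Real.abs_cos_le_one _
  have hi2 := hbound _ hc2 fun p => Real.abs_cos_le_one _
  rw [integral_add hi1 hi2, MeasureTheory.integral_prod _ hi2]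
  simp_rw [cos_shift_int]
  rw [MeasureTheory.integral_prod _ hi1]
  simp [hk]
end

section
/- Closed form of the expected Gaussian kernel between two Gaussians: let r = N(m_r, V_r) and s = N(m_s, V_s) be Gaussian measures on ℝ^d with symmetric positive definite covariances V_r, V_s, and let Σ be a symmetric positive definite d×d matrix. Then E_{x∼r} E_{y∼s}[ exp(−(1/2)(x−y)ᵀ Σ^{-1} (x−y)) ] = √( det(Σ) / det(V_r + V_s + Σ) ) · exp( −(1/2)(m_r − m_s)ᵀ (V_r + V_s + Σ)^{-1} (m_r − m_s) ). -/
open MeasureTheory ProbabilityTheory Matrix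

/-- The positive semidefinite square root of a positive semidefinite matrix (the definition
`Matrix.PosSemidef.sqrt` of the older Mathlib, since removed). -/
noncomputable def Matrix.PosSemidef.sqrt {n : Type*} [Fintype n] [DecidableEq n]
    {A : Matrix n n ℝ} (hA : A.PosSemidef) : Matrix n n ℝ :=
  hA.1.eigenvectorUnitary.1 * diagonal ((√·) ∘ hA.1.eigenvalues) *
  (star hA.1.eigenvectorUnitary : Matrix n n ℝ)

/-- The standard Gaussian measure on `ℝ^d`: product of `d` i.i.d. `N(0,1)` coordinates. -/
noncomputable def stdGaussianPi (d : ℕ) : Measure (Fin d → ℝ) :=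
  Measure.pi fun _ => gaussianReal 0 1

/-- The multivariate Gaussian measure `N(m, V)` on `ℝ^d` with mean vector `m` and symmetric
positive semidefinite covariance matrix `V`, realized as the law of `m + V^{1/2} z` for a
standard Gaussian vector `z`. -/
noncomputable def multivariateGaussian {d : ℕ} (m : Fin d → ℝ) (V : Matrix (Fin d) (Fin d) ℝ)
    (hV : V.PosSemidef) : Measure (Fin d → ℝ) :=
  Measure.map (fun z => m + hV.sqrt.mulVec z) (stdGaussianPi d)

namespace EGK

open Real
open scoped ENNReal NNReal

variable {d : ℕ}

lemma psd_sqrt_psd {A : Matrix (Fin d) (Fin d) ℝ} (hA : A.PosSemidef) : hA.sqrt.PosSemidef := by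
  unfold Matrix.PosSemidef.sqrt
  have h0 : (0 : Fin d → ℝ) ≤ ((√·) ∘ hA.1.eigenvalues) := fun i => Real.sqrt_nonneg _
  have := (PosSemidef.diagonal h0).mul_mul_conjTranspose_same
    (hA.1.eigenvectorUnitary : Matrix (Fin d) (Fin d) ℝ)
  simpa [Unitary.coe_star, Matrix.star_eq_conjTranspose] using this

lemma psd_sqrt_mul_self {A : Matrix (Fin d) (Fin d) ℝ} (hA : A.PosSemidef) :
    hA.sqrt * hA.sqrt = A := by
  unfold Matrix.PosSemidef.sqrt
  have hU : (star hA.1.eigenvectorUnitary : Matrix (Fin d) (Fin d) ℝ) *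
      (hA.1.eigenvectorUnitary : Matrix (Fin d) (Fin d) ℝ) = 1 :=
    Unitary.coe_star_mul_self _
  rw [show ∀ U D W : Matrix (Fin d) (Fin d) ℝ, U * D * W * (U * D * W) = U * (D * (W * U) * D) * W
    from fun U D W => by simp only [mul_assoc], hU, mul_one, diagonal_mul_diagonal]
  conv_rhs => rw [hA.1.spectral_theorem]
  rw [Unitary.conjStarAlgAut_apply]
  congr
  ext i
  simp [Real.mul_self_sqrt (hA.eigenvalues_nonneg i)]

lemma continuous_mulVec' (A : Matrix (Fin d) (Fin d) ℝ) :
    Continuous fun z : Fin d → ℝ => A *ᵥ z := by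
  refine continuous_pi fun i => ?_
  simp only [mulVec, dotProduct]
  exact continuous_finset_sum _ fun j _ => continuous_const.mul (continuous_apply j)

lemma continuous_quad (A : Matrix (Fin d) (Fin d) ℝ) :
    Continuous fun z : Fin d → ℝ => z ⬝ᵥ A *ᵥ z := by
  simp only [mulVec, dotProduct]
  exact continuous_finset_sum _ fun i _ => (continuous_apply i).mul
    (continuous_finset_sum _ fun j _ => continuous_const.mul (continuous_apply j))

lemma mulVec_dotProduct' (A : Matrix (Fin d) (Fin d) ℝ) (x y : Fin d → ℝ) :
    (A *ᵥ x) ⬝ᵥ y = x ⬝ᵥ (Aᵀ *ᵥ y) := by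
  rw [dotProduct_mulVec, vecMul_transpose]

lemma psd_det_nonneg {A : Matrix (Fin d) (Fin d) ℝ} (hA : A.PosSemidef) : 0 ≤ A.det := by
  rw [hA.isHermitian.det_eq_prod_eigenvalues]
  exact Finset.prod_nonneg fun i _ => by exact_mod_cast hA.eigenvalues_nonneg i

lemma quad_nonneg {A : Matrix (Fin d) (Fin d) ℝ} (hA : A.PosSemidef) (x : Fin d → ℝ) :
    0 ≤ x ⬝ᵥ A *ᵥ x := by
  have := hA.dotProduct_mulVec_nonneg x
  simpa using this

/-- lintegral of a product of functions of separate coordinates w.r.t. a finite product measure. -/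
lemma lintegral_pi_prod : ∀ {n : ℕ} (μ : Measure ℝ) [SigmaFinite μ]
    (f : Fin n → ℝ → ENNReal), (∀ i, Measurable (f i)) →
    ∫⁻ x : Fin n → ℝ, ∏ i, f i (x i) ∂(Measure.pi fun _ => μ) = ∏ i, ∫⁻ x, f i x ∂μ
  | 0, μ, _, f, hf => by simp
  | n + 1, μ, _, f, hf => by
    have h := (measurePreserving_piFinSuccAbove (fun _ : Fin (n + 1) => μ) 0).map_eq
    have hmeas : Measurable fun p : ℝ × (Fin n → ℝ) =>
        f 0 p.1 * ∏ i : Fin n, f i.succ (p.2 i) :=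
      ((hf 0).comp measurable_fst).mul
        (Finset.measurable_prod _ fun i _ => (hf i.succ).comp ((measurable_pi_apply i).comp
          measurable_snd))
    calc ∫⁻ x : Fin (n + 1) → ℝ, ∏ i, f i (x i) ∂(Measure.pi fun _ => μ)
        = ∫⁻ p : ℝ × (Fin n → ℝ), f 0 p.1 * ∏ i : Fin n, f i.succ (p.2 i)
            ∂(μ.prod (Measure.pi fun _ => μ)) := by
          rw [← h, lintegral_map hmeas (MeasurableEquiv.measurable _)]
          congr 1
          ext x
          rw [Fin.prod_univ_succ]
          simp [MeasurableEquiv.piFinSuccAbove, Fin.removeNth, Fin.zero_succAbove, Fin.tail]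
      _ = (∫⁻ x, f 0 x ∂μ) * ∏ i : Fin n, ∫⁻ x, f i.succ x ∂μ := by
          rw [lintegral_prod_mul (f := fun x => f 0 x)
            (g := fun y : Fin n → ℝ => ∏ i : Fin n, f i.succ (y i)) (hf 0).aemeasurable
            (Finset.measurable_prod _ fun i _ => (hf i.succ).comp
              (measurable_pi_apply i)).aemeasurable]
          rw [lintegral_pi_prod μ (fun i => f i.succ) fun i => hf i.succ]
      _ = ∏ i, ∫⁻ x, f i x ∂μ := by rw [Fin.prod_univ_succ]

lemma stdGaussianPi_eq_withDensity (d : ℕ) :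
    stdGaussianPi d
      = (volume : Measure (Fin d → ℝ)).withDensity fun z => ∏ i, gaussianPDF 0 1 (z i) := by
  refine Measure.pi_eq fun s hs => ?_
  rw [withDensity_apply _ (MeasurableSet.univ_pi hs)]
  have h1 : ∫⁻ z in Set.univ.pi s, ∏ i, gaussianPDF 0 1 (z i)
      = ∫⁻ z : Fin d → ℝ, ∏ i, (s i).indicator (gaussianPDF 0 1) (z i) := by
    rw [← lintegral_indicator (MeasurableSet.univ_pi hs)]
    congr 1
    ext z
    by_cases hz : z ∈ Set.univ.pi s
    · rw [Set.indicator_of_mem hz]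
      exact Finset.prod_congr rfl fun i _ =>
        (Set.indicator_of_mem (hz i (Set.mem_univ i)) _).symm
    · rw [Set.indicator_of_notMem hz]
      rw [Set.mem_univ_pi] at hz
      push_neg at hz
      obtain ⟨i, his⟩ := hz
      exact (Finset.prod_eq_zero (Finset.mem_univ i)
        (by rw [Set.indicator_of_notMem his])).symm
  rw [h1]
  have h2 := lintegral_pi_prod (volume : Measure ℝ)
    (fun i => (s i).indicator (gaussianPDF 0 1))
    (fun i => (measurable_gaussianPDF 0 1).indicator (hs i))
  rw [show (volume : Measure (Fin d → ℝ)) = Measure.pi fun _ : Fin d => (volume : Measure ℝ) from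
    MeasureTheory.volume_pi, h2]
  refine Finset.prod_congr rfl fun i _ => ?_
  rw [lintegral_indicator (hs i), gaussianReal_apply 0 one_ne_zero (s i)]

lemma integral_stdGaussianPi (g : (Fin d → ℝ) → ℝ) :
    ∫ z, g z ∂stdGaussianPi d
      = ∫ z : Fin d → ℝ, (∏ i, gaussianPDFReal 0 1 (z i)) * g z := by
  rw [stdGaussianPi_eq_withDensity]
  have hd : (fun z : Fin d → ℝ => ∏ i, gaussianPDF 0 1 (z i))
      = fun z : Fin d → ℝ => ((∏ i, gaussianPDFReal 0 1 (z i)).toNNReal : ℝ≥0∞) := by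
    ext z
    rw [show (((∏ i, gaussianPDFReal 0 1 (z i)).toNNReal : ℝ≥0∞))
        = ENNReal.ofReal (∏ i, gaussianPDFReal 0 1 (z i)) from rfl,
      ENNReal.ofReal_prod_of_nonneg fun i _ => gaussianPDFReal_nonneg 0 1 (z i)]
    simp [gaussianPDF_def]
  have hm : Measurable fun z : Fin d → ℝ => (∏ i, gaussianPDFReal 0 1 (z i)).toNNReal :=
    (Finset.measurable_prod _ fun i _ =>
      (measurable_gaussianPDFReal 0 1).comp (measurable_pi_apply i)).real_toNNReal
  rw [hd, integral_withDensity_eq_integral_smul hm g]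
  congr 1
  ext z
  rw [NNReal.smul_def, Real.coe_toNNReal _
    (Finset.prod_nonneg fun i _ => gaussianPDFReal_nonneg 0 1 (z i))]
  simp [smul_eq_mul]

lemma sqrt_pow_eq {x : ℝ} (hx : 0 ≤ x) (n : ℕ) : Real.sqrt x ^ n = Real.sqrt (x ^ n) := by
  induction n with
  | zero => simp
  | succ k ih => rw [pow_succ, pow_succ, ih, ← Real.sqrt_mul (pow_nonneg hx _)]

lemma integral_exp_neg_half_dot :
    ∫ z : Fin d → ℝ, Real.exp (-(1/2) * (z ⬝ᵥ z)) = Real.sqrt (2 * π) ^ d := by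
  have h : ∀ z : Fin d → ℝ, Real.exp (-(1/2) * (z ⬝ᵥ z))
      = ∏ i, Real.exp (-(1/2) * (z i * z i)) := by
    intro z
    rw [← Real.exp_sum]
    congr 1
    rw [dotProduct, Finset.mul_sum]
  simp_rw [h]
  rw [MeasureTheory.volume_pi, integral_fintype_prod_eq_pow (ι := Fin d) (fun x : ℝ => Real.exp (-(1/2) * (x * x)))]
  have h2 : (fun x : ℝ => Real.exp (-(1/2) * (x * x))) = fun x : ℝ => Real.exp (-(1/2) * x ^ 2) := by
    ext x; congr 1; ring
  rw [h2, integral_gaussian (1/2 : ℝ), Fintype.card_fin]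
  congr 2
  rw [eq_comm, eq_div_iff (by norm_num : (1/2 : ℝ) ≠ 0)]
  ring

lemma integral_exp_quad (C : Matrix (Fin d) (Fin d) ℝ) (hC : C.PosDef) (b : Fin d → ℝ) :
    ∫ z : Fin d → ℝ, Real.exp (-(1/2) * (z ⬝ᵥ C *ᵥ z) + b ⬝ᵥ z)
      = Real.sqrt ((2 * π) ^ d / C.det) * Real.exp ((1/2) * (b ⬝ᵥ C⁻¹ *ᵥ b)) := by
  have hdet : IsUnit C.det := hC.det_pos.ne'.isUnit
  have hCsym : Cᵀ = C := hC.isHermitian.eq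
  set a := C⁻¹ *ᵥ b with ha
  have hCa : C *ᵥ a = b := by rw [ha, mulVec_mulVec, mul_nonsing_inv _ hdet, one_mulVec]
  have hvmul : a ᵥ* C = b := by rw [← hCsym, vecMul_transpose, hCa]
  -- the square root matrix of C⁻¹
  have hCinv : C⁻¹.PosDef := hC.inv
  set P := hCinv.posSemidef.sqrt with hP
  have hPpsd : P.PosSemidef := psd_sqrt_psd hCinv.posSemidef
  have hPP : P * P = C⁻¹ := psd_sqrt_mul_self hCinv.posSemidef
  have hPsym : Pᵀ = P := hPpsd.isHermitian.eq
  have hPdet2 : P.det * P.det = C.det⁻¹ := by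
    rw [← det_mul, hPP, det_nonsing_inv, Ring.inverse_eq_inv']
  have hPdetne : P.det ≠ 0 := by
    intro h0
    rw [h0, mul_zero] at hPdet2
    exact (inv_pos.mpr hC.det_pos).ne' hPdet2.symm
  have hPdetpos : 0 < P.det := lt_of_le_of_ne (psd_det_nonneg hPpsd) (Ne.symm hPdetne)
  have hPdetval : P.det = Real.sqrt C.det⁻¹ := by
    rw [← hPdet2, Real.sqrt_mul_self hPdetpos.le]
  have hPCP : (P * C) * P = 1 := by
    have h1 : P * (P * C) = 1 := by rw [← mul_assoc, hPP, nonsing_inv_mul _ hdet]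
    have h2 : P⁻¹ = P * C := inv_eq_right_inv h1
    rw [← h2, nonsing_inv_mul _ hPdetpos.ne'.isUnit]
  have hfc : Continuous fun z : Fin d → ℝ => Real.exp (-(1/2) * (z ⬝ᵥ C *ᵥ z)) :=
    Real.continuous_exp.comp (continuous_const.mul (continuous_quad C))
  calc ∫ z : Fin d → ℝ, Real.exp (-(1/2) * (z ⬝ᵥ C *ᵥ z) + b ⬝ᵥ z)
      = ∫ z : Fin d → ℝ, Real.exp (-(1/2) * ((z + a) ⬝ᵥ C *ᵥ (z + a)) + b ⬝ᵥ (z + a)) :=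
        (integral_add_right_eq_self (fun z : Fin d → ℝ =>
          Real.exp (-(1/2) * (z ⬝ᵥ C *ᵥ z) + b ⬝ᵥ z)) a).symm
    _ = ∫ z : Fin d → ℝ, Real.exp (-(1/2) * (z ⬝ᵥ C *ᵥ z))
          * Real.exp ((1/2) * (b ⬝ᵥ C⁻¹ *ᵥ b)) := by
        congr 1
        ext z
        rw [← Real.exp_add]
        congr 1
        have h2 : a ⬝ᵥ C *ᵥ z = b ⬝ᵥ z := by rw [dotProduct_mulVec, hvmul]
        rw [mulVec_add, add_dotProduct, dotProduct_add, dotProduct_add, hCa, h2,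
          dotProduct_add, ← ha]
        rw [dotProduct_comm z b, dotProduct_comm a b]
        ring
    _ = (∫ z : Fin d → ℝ, Real.exp (-(1/2) * (z ⬝ᵥ C *ᵥ z)))
          * Real.exp ((1/2) * (b ⬝ᵥ C⁻¹ *ᵥ b)) := integral_mul_const _ _
    _ = Real.sqrt ((2 * π) ^ d / C.det) * Real.exp ((1/2) * (b ⬝ᵥ C⁻¹ *ᵥ b)) := by
        congr 1
        have hmap := Real.map_matrix_volume_pi_eq_smul_volume_pi (M := P) hPdetne
        have hvol : (volume : Measure (Fin d → ℝ))
            = (ENNReal.ofReal P.det) • Measure.map (⇑(toLin' P)) volume := by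
          rw [hmap, smul_smul, ← ENNReal.ofReal_mul hPdetpos.le, abs_of_pos
            (inv_pos.mpr hPdetpos), mul_inv_cancel₀ hPdetne, ENNReal.ofReal_one, one_smul]
        calc ∫ z : Fin d → ℝ, Real.exp (-(1/2) * (z ⬝ᵥ C *ᵥ z))
            = ∫ z, Real.exp (-(1/2) * (z ⬝ᵥ C *ᵥ z))
                ∂((ENNReal.ofReal P.det) • Measure.map (⇑(toLin' P)) volume) := by rw [← hvol]
          _ = P.det * ∫ z, Real.exp (-(1/2) * (z ⬝ᵥ C *ᵥ z)) ∂(Measure.map (⇑(toLin' P)) volume) := by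
              rw [integral_smul_measure, ENNReal.toReal_ofReal hPdetpos.le, smul_eq_mul]
          _ = P.det * ∫ z : Fin d → ℝ, Real.exp (-(1/2) * ((P *ᵥ z) ⬝ᵥ C *ᵥ (P *ᵥ z))) := by
              rw [integral_map (Measurable.aemeasurable (by
                  exact (LinearMap.continuous_on_pi _).measurable))
                hfc.aestronglyMeasurable]
              simp_rw [toLin'_apply]
          _ = P.det * ∫ z : Fin d → ℝ, Real.exp (-(1/2) * (z ⬝ᵥ z)) := by
              congr 1
              congr 1
              ext z
              congr 2
              rw [mulVec_mulVec, mulVec_dotProduct', mulVec_mulVec, hPsym, ← mul_assoc, hPCP,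
                one_mulVec]
          _ = Real.sqrt ((2 * π) ^ d / C.det) := by
              rw [integral_exp_neg_half_dot, hPdetval, sqrt_pow_eq (by positivity),
                ← Real.sqrt_mul (inv_nonneg.mpr hC.det_pos.le), div_eq_mul_inv, mul_comm]

lemma gaussianPDFReal_std (x : ℝ) :
    gaussianPDFReal 0 1 x = (Real.sqrt (2 * π))⁻¹ * Real.exp (-(1/2) * (x * x)) := by
  simp only [gaussianPDFReal_def, NNReal.coe_one, mul_one, sub_zero]
  congr 1
  ring

lemma integral_exp_quad_std (M : Matrix (Fin d) (Fin d) ℝ) (hM : M.PosSemidef)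
    (b : Fin d → ℝ) (c : ℝ) :
    ∫ z, Real.exp (-(1/2) * (z ⬝ᵥ M *ᵥ z) + b ⬝ᵥ z + c) ∂stdGaussianPi d
      = Real.sqrt (1 / (1 + M).det)
        * Real.exp ((1/2) * (b ⬝ᵥ (1 + M)⁻¹ *ᵥ b) + c) := by
  have hC : (1 + M).PosDef := Matrix.PosDef.add_posSemidef Matrix.PosDef.one hM
  rw [integral_stdGaussianPi]
  have hpt : ∀ z : Fin d → ℝ, (∏ i, gaussianPDFReal 0 1 (z i))
      * Real.exp (-(1/2) * (z ⬝ᵥ M *ᵥ z) + b ⬝ᵥ z + c)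
      = (Real.sqrt (2 * π))⁻¹ ^ d
        * (Real.exp (-(1/2) * (z ⬝ᵥ (1 + M) *ᵥ z) + b ⬝ᵥ z) * Real.exp c) := by
    intro z
    have h1 : ∏ i, gaussianPDFReal 0 1 (z i)
        = (Real.sqrt (2 * π))⁻¹ ^ d * Real.exp (-(1/2) * (z ⬝ᵥ z)) := by
      simp_rw [gaussianPDFReal_std]
      rw [Finset.prod_mul_distrib, Finset.prod_const, Finset.card_univ, Fintype.card_fin,
        ← Real.exp_sum]
      congr 2
      rw [dotProduct, Finset.mul_sum]
    rw [h1, mul_assoc]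
    congr 1
    rw [← Real.exp_add, ← Real.exp_add]
    congr 1
    rw [add_mulVec, one_mulVec, dotProduct_add]
    ring
  simp_rw [hpt]
  rw [integral_const_mul, integral_mul_const, integral_exp_quad (1 + M) hC b]
  have hconst : (Real.sqrt (2 * π))⁻¹ ^ d * Real.sqrt ((2 * π) ^ d / (1 + M).det)
      = Real.sqrt (1 / (1 + M).det) := by
    have h2πd : (0:ℝ) < (2 * π) ^ d := by positivity
    rw [inv_pow, sqrt_pow_eq (by positivity : (0:ℝ) ≤ 2 * π), ← Real.sqrt_inv,
      ← Real.sqrt_mul (inv_nonneg.mpr h2πd.le)]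
    congr 1
    field_simp
  rw [Real.exp_add, ← hconst]
  ring

lemma woodbury (R Q : Matrix (Fin d) (Fin d) ℝ) (hQ : Q.PosDef)
    (hC : (1 + R * Q * R).PosDef) :
    (Q⁻¹ + R * R)⁻¹ = Q - Q * R * (1 + R * Q * R)⁻¹ * (R * Q) := by
  have hQdet : IsUnit Q.det := hQ.det_pos.ne'.isUnit
  have hCdet : IsUnit (1 + R * Q * R).det := hC.det_pos.ne'.isUnit
  refine inv_eq_right_inv ?_
  have key : R * (1 + R * Q * R)⁻¹ * (R * Q)
      + R * (R * Q * R) * (1 + R * Q * R)⁻¹ * (R * Q) = R * (R * Q) := by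
    have h : R * (1 + R * Q * R)⁻¹ * (R * Q)
        + R * (R * Q * R) * (1 + R * Q * R)⁻¹ * (R * Q)
        = R * ((1 + R * Q * R) * (1 + R * Q * R)⁻¹) * (R * Q) := by noncomm_ring
    rw [h, mul_nonsing_inv _ hCdet, mul_one]
  calc (Q⁻¹ + R * R) * (Q - Q * R * (1 + R * Q * R)⁻¹ * (R * Q))
      = Q⁻¹ * Q - Q⁻¹ * Q * (R * (1 + R * Q * R)⁻¹ * (R * Q))
        + (R * (R * Q) - R * (R * Q * R) * (1 + R * Q * R)⁻¹ * (R * Q)) := by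
        noncomm_ring
    _ = 1 - (R * (1 + R * Q * R)⁻¹ * (R * Q)
        + R * (R * Q * R) * (1 + R * Q * R)⁻¹ * (R * Q)) + R * (R * Q) := by
        rw [nonsing_inv_mul _ hQdet]; noncomm_ring
    _ = 1 := by rw [key]; noncomm_ring

lemma integral_gauss_kernel_gaussian (m t : Fin d → ℝ) {V Q : Matrix (Fin d) (Fin d) ℝ}
    (hV : V.PosDef) (hQ : Q.PosDef) :
    ∫ w, Real.exp (-(1/2) * ((w - t) ⬝ᵥ Q *ᵥ (w - t))) ∂(multivariateGaussian m V hV.posSemidef)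
      = Real.sqrt (1 / (1 + Q * V).det)
        * Real.exp (-(1/2) * ((m - t) ⬝ᵥ (Q⁻¹ + V)⁻¹ *ᵥ (m - t))) := by
  set R := hV.posSemidef.sqrt with hRdef
  have hRpsd : R.PosSemidef := psd_sqrt_psd hV.posSemidef
  have hRsym : Rᵀ = R := hRpsd.isHermitian.eq
  have hRR : R * R = V := psd_sqrt_mul_self hV.posSemidef
  have hQsym : Qᵀ = Q := hQ.isHermitian.eq
  have hRQt : (R * Q)ᵀ = Q * R := by rw [transpose_mul, hRsym, hQsym]
  have hQRt : (Q * R)ᵀ = R * Q := by rw [transpose_mul, hRsym, hQsym]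
  set v := m - t with hv
  have hMpsd : (R * Q * R).PosSemidef := by
    have h := hQ.posSemidef.conjTranspose_mul_mul_same R
    rwa [conjTranspose_eq_transpose_of_trivial, hRsym] at h
  have hCpd : (1 + R * Q * R).PosDef := Matrix.PosDef.add_posSemidef Matrix.PosDef.one hMpsd
  have hfcont : Continuous fun w : Fin d → ℝ => Real.exp (-(1/2) * ((w - t) ⬝ᵥ Q *ᵥ (w - t))) :=
    Real.continuous_exp.comp (continuous_const.mul
      ((continuous_quad Q).comp (continuous_id.sub continuous_const)))
  rw [_root_.multivariateGaussian, integral_map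
    (Continuous.aemeasurable (f := fun z => m + R *ᵥ z) (continuous_const.add (continuous_mulVec' R)))
    hfcont.aestronglyMeasurable]
  have hexp : ∀ z : Fin d → ℝ, -(1/2) * ((m + R *ᵥ z - t) ⬝ᵥ Q *ᵥ (m + R *ᵥ z - t))
      = -(1/2) * (z ⬝ᵥ (R * Q * R) *ᵥ z) + (-((R * Q) *ᵥ v)) ⬝ᵥ z
        + (-(1/2) * (v ⬝ᵥ Q *ᵥ v)) := by
    intro z
    have e0 : m + R *ᵥ z - t = v + R *ᵥ z := by rw [hv]; abel
    have e1 : v ⬝ᵥ (Q * R) *ᵥ z = ((R * Q) *ᵥ v) ⬝ᵥ z := by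
      rw [dotProduct_mulVec, ← hRQt, vecMul_transpose]
    have e2 : (R *ᵥ z) ⬝ᵥ Q *ᵥ v = z ⬝ᵥ (R * Q) *ᵥ v := by
      rw [mulVec_dotProduct', hRsym, mulVec_mulVec]
    have e3 : (R *ᵥ z) ⬝ᵥ (Q * R) *ᵥ z = z ⬝ᵥ (R * Q * R) *ᵥ z := by
      rw [mulVec_dotProduct', hRsym, mulVec_mulVec, ← mul_assoc]
    rw [e0, mulVec_add, mulVec_mulVec, add_dotProduct, dotProduct_add, dotProduct_add, e1, e2, e3,
      neg_dotProduct, dotProduct_comm z ((R * Q) *ᵥ v)]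
    ring
  simp_rw [hexp]
  rw [integral_exp_quad_std (R * Q * R) hMpsd (-((R * Q) *ᵥ v)) (-(1/2) * (v ⬝ᵥ Q *ᵥ v))]
  have hdet : (1 + R * Q * R).det = (1 + Q * V).det := by
    rw [mul_assoc, det_one_add_mul_comm, mul_assoc, hRR]
  have hquad : (-((R * Q) *ᵥ v)) ⬝ᵥ (1 + R * Q * R)⁻¹ *ᵥ (-((R * Q) *ᵥ v))
      = v ⬝ᵥ (Q * R * (1 + R * Q * R)⁻¹ * (R * Q)) *ᵥ v := by
    rw [neg_dotProduct, mulVec_neg, dotProduct_neg, neg_neg, mulVec_dotProduct', hRQt,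
      mulVec_mulVec, mulVec_mulVec]
  have hwood := woodbury R Q hQ hCpd
  rw [hRR] at hwood
  rw [hdet, hquad]
  congr 1
  congr 1
  rw [hwood, sub_mulVec, dotProduct_sub]
  ring

end EGK

open EGK Real

/-- Closed form of the expected Gaussian kernel between two Gaussians: for
`r = N(m_r, V_r)`, `s = N(m_s, V_s)` with symmetric positive definite covariances and a
symmetric positive definite kernel parameter `Σ`,
`E_{x∼r} E_{y∼s} [exp (-(1/2)(x-y)ᵀΣ⁻¹(x-y))]
  = √(det Σ / det (V_r + V_s + Σ)) * exp (-(1/2)(m_r - m_s)ᵀ(V_r + V_s + Σ)⁻¹(m_r - m_s))`. -/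
theorem expected_gaussian_kernel_of_gaussians {d : ℕ} (mr ms : Fin d → ℝ)
    (Vr Vs S : Matrix (Fin d) (Fin d) ℝ) (hVr : Vr.PosDef) (hVs : Vs.PosDef)
    (hS : S.PosDef) :
    ∫ p : (Fin d → ℝ) × (Fin d → ℝ),
        Real.exp (-(1 / 2) * ((p.1 - p.2) ⬝ᵥ S⁻¹.mulVec (p.1 - p.2)))
        ∂((multivariateGaussian mr Vr hVr.posSemidef).prod
          (multivariateGaussian ms Vs hVs.posSemidef)) =
      Real.sqrt (S.det / (Vr + Vs + S).det) *
        Real.exp (-(1 / 2) * ((mr - ms) ⬝ᵥ (Vr + Vs + S)⁻¹.mulVec (mr - ms))) := by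
  have hSinv : (S⁻¹).PosDef := hS.inv
  have hSVs : (S + Vs).PosDef := hS.add_posSemidef hVs.posSemidef
  have hSVsinv : ((S + Vs)⁻¹).PosDef := hSVs.inv
  have habc : S + Vs + Vr = Vr + Vs + S := by abel
  have hall : (Vr + Vs + S).PosDef := (hVr.add_posSemidef hVs.posSemidef).add_posSemidef
    hS.posSemidef
  haveI hstd : IsProbabilityMeasure (stdGaussianPi d) := by
    rw [stdGaussianPi]; infer_instance
  haveI instr : IsProbabilityMeasure (multivariateGaussian mr Vr hVr.posSemidef) := by
    rw [_root_.multivariateGaussian]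
    exact Measure.isProbabilityMeasure_map
      (Continuous.aemeasurable (continuous_const.add (continuous_mulVec' _)))
  haveI insts : IsProbabilityMeasure (multivariateGaussian ms Vs hVs.posSemidef) := by
    rw [_root_.multivariateGaussian]
    exact Measure.isProbabilityMeasure_map
      (Continuous.aemeasurable (continuous_const.add (continuous_mulVec' _)))
  have hfc : Continuous fun p : (Fin d → ℝ) × (Fin d → ℝ) =>
      Real.exp (-(1 / 2) * ((p.1 - p.2) ⬝ᵥ S⁻¹.mulVec (p.1 - p.2))) :=
    Real.continuous_exp.comp (continuous_const.mul
      ((continuous_quad S⁻¹).comp (continuous_fst.sub continuous_snd)))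
  have hfint : Integrable (fun p : (Fin d → ℝ) × (Fin d → ℝ) =>
      Real.exp (-(1 / 2) * ((p.1 - p.2) ⬝ᵥ S⁻¹.mulVec (p.1 - p.2))))
      ((multivariateGaussian mr Vr hVr.posSemidef).prod
        (multivariateGaussian ms Vs hVs.posSemidef)) := by
    refine Integrable.mono' (integrable_const 1) hfc.aestronglyMeasurable
      (Filter.Eventually.of_forall fun p => ?_)
    rw [Real.norm_eq_abs, abs_of_pos (Real.exp_pos _)]
    apply Real.exp_le_one_iff.mpr
    have h0 := quad_nonneg hSinv.posSemidef (p.1 - p.2)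
    nlinarith
  rw [integral_prod _ hfint]
  have hinner : ∀ x : Fin d → ℝ,
      (∫ y, Real.exp (-(1 / 2) * ((x - y) ⬝ᵥ S⁻¹.mulVec (x - y)))
        ∂(multivariateGaussian ms Vs hVs.posSemidef))
        = Real.sqrt (1 / (1 + S⁻¹ * Vs).det)
          * Real.exp (-(1/2) * ((x - ms) ⬝ᵥ (S + Vs)⁻¹ *ᵥ (x - ms))) := by
    intro x
    have h1 : ∀ y : Fin d → ℝ, Real.exp (-(1 / 2) * ((x - y) ⬝ᵥ S⁻¹.mulVec (x - y)))
        = Real.exp (-(1/2) * ((y - x) ⬝ᵥ S⁻¹ *ᵥ (y - x))) := by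
      intro y
      rw [show x - y = -(y - x) from (neg_sub y x).symm, neg_dotProduct, mulVec_neg,
        dotProduct_neg, neg_neg]
    simp_rw [h1]
    rw [integral_gauss_kernel_gaussian ms x hVs hSinv,
      Matrix.nonsing_inv_nonsing_inv S hS.det_pos.ne'.isUnit]
    congr 2
    rw [show ms - x = -(x - ms) from (neg_sub x ms).symm, neg_dotProduct, mulVec_neg,
      dotProduct_neg, neg_neg]
  simp_rw [hinner]
  rw [integral_const_mul, integral_gauss_kernel_gaussian mr ms hVr hSVsinv,
    Matrix.nonsing_inv_nonsing_inv (S + Vs) hSVs.det_pos.ne'.isUnit, habc]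
  rw [← mul_assoc]
  congr 1
  have e1 : (1 + S⁻¹ * Vs).det = S.det⁻¹ * (S + Vs).det := by
    have h : (1 : Matrix (Fin d) (Fin d) ℝ) + S⁻¹ * Vs = S⁻¹ * (S + Vs) := by
      rw [mul_add, nonsing_inv_mul _ hS.det_pos.ne'.isUnit]
    rw [h, det_mul, det_nonsing_inv, Ring.inverse_eq_inv']
  have e2 : (1 + (S + Vs)⁻¹ * Vr).det = (S + Vs).det⁻¹ * (Vr + Vs + S).det := by
    have h : (1 : Matrix (Fin d) (Fin d) ℝ) + (S + Vs)⁻¹ * Vr = (S + Vs)⁻¹ * (Vr + Vs + S) := by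
      rw [← habc, mul_add, nonsing_inv_mul _ hSVs.det_pos.ne'.isUnit]
    rw [h, det_mul, det_nonsing_inv, Ring.inverse_eq_inv']
  rw [e1, e2, ← Real.sqrt_mul (by
    have h1 := hS.det_pos
    have h2 := hSVs.det_pos
    positivity)]
  congr 1
  have h1 := hS.det_pos.ne'
  have h2 := hSVs.det_pos.ne'
  have h3 := hall.det_pos.ne'
  field_simp
end
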